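/- For every n ≥ 1, the full arc complex of a crown with n boundary vertices strongly collapses onto its inner arc complex; in particular, since the inner arc complex is an (n−1)-simplex, the full arc complex of a crown is strongly collapsible. -/
import Mathlib


open Finset

attribute [local instance] Classical.propDecidable

noncomputable section

universe u v

/-- A finite abstract simplicial complex: a finite collection of nonempty finite sets
closed under taking nonempty subsets. -/
def IsComplex {V : Type u} (X : Finset (Finset V)) : Prop :=
  (∀ s ∈ X, s.Nonempty) ∧ ∀ s ∈ X, ∀ t : Finset V, t ⊆ s → t.Nonempty → t ∈ X

/-- `s` is a maximal simplex (facet) of `X`. -/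
def IsFacet {V : Type u} (X : Finset (Finset V)) (s : Finset V) : Prop :=
  s ∈ X ∧ ∀ t ∈ X, s ⊆ t → t = s

/-- An elementary collapse: `σ` is a free face of `X` whose unique maximal coface is `τ`,
and `Y` results from removing all simplices containing `σ`. -/
def ElemCollapse {V : Type u} (X Y : Finset (Finset V)) : Prop :=
  ∃ σ τ : Finset V, σ ∈ X ∧ IsFacet X τ ∧ σ ⊂ τ ∧
    (∀ t ∈ X, σ ⊆ t → t ⊆ τ) ∧ Y = X.filter (fun s => ¬ σ ⊆ s)

/-- `X` simplicially collapses onto `Y`. -/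
def Collapses {V : Type u} (X Y : Finset (Finset V)) : Prop :=
  Relation.ReflTransGen ElemCollapse X Y

/-- `X` is collapsible: it collapses to a single vertex. -/
def Collapsible {V : Type u} (X : Finset (Finset V)) : Prop :=
  ∃ v : V, Collapses X {{v}}

/-- The vertex `v` is dominated by the vertex `w ≠ v`: every facet containing `v`
contains `w`. -/
def Dominated {V : Type u} (X : Finset (Finset V)) (v w : V) : Prop :=
  w ≠ v ∧ ∀ s : Finset V, IsFacet X s → v ∈ s → w ∈ s

/-- An elementary strong collapse: deletion of a dominated vertex. -/
def ElemStrongCollapse {V : Type u} (X Y : Finset (Finset V)) : Prop :=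
  ∃ v w : V, {v} ∈ X ∧ Dominated X v w ∧ Y = X.filter (fun s => v ∉ s)

/-- `X` strongly collapses onto `Y`. -/
def StrongCollapses {V : Type u} (X Y : Finset (Finset V)) : Prop :=
  Relation.ReflTransGen ElemStrongCollapse X Y

/-- `X` is strongly collapsible: it strongly collapses to a single vertex. -/
def StrongCollapsible {V : Type u} (X : Finset (Finset V)) : Prop :=
  ∃ v : V, StrongCollapses X {{v}}

/-- The set of vertices of a complex. -/
def vertexSet {V : Type u} (X : Finset (Finset V)) : Finset V := X.sup id

/-- The link of a simplex `σ` in `X`. -/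
def linkC {V : Type u} (X : Finset (Finset V)) (σ : Finset V) : Finset (Finset V) :=
  X.filter (fun η => Disjoint η σ ∧ η ∪ σ ∈ X)

/-- The face-deletion of `σ` in `X`. -/
def faceDeletion {V : Type u} (X : Finset (Finset V)) (σ : Finset V) : Finset (Finset V) :=
  X.filter (fun η => ¬ σ ⊆ η)

/-- The simplicial join of two complexes (on disjoint vertex sets, via `Sum`). -/
def joinC {A : Type u} {B : Type v} (X : Finset (Finset A)) (Y : Finset (Finset B)) :
    Finset (Finset (A ⊕ B)) :=
  (((insert (∅ : Finset A) X) ×ˢ (insert (∅ : Finset B) Y)).image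
      (fun p => p.1.image Sum.inl ∪ p.2.image Sum.inr)).filter (·.Nonempty)

/-- The flag (clique) complex on the admissible vertices (those satisfying `P`) of a
finite type, with respect to a (reflexive, symmetric) compatibility relation `R`:
simplices are the nonempty finite sets of admissible vertices that are pairwise
compatible. -/
def cliqueComplex {A : Type u} [Fintype A] (P : A → Prop) (R : A → A → Prop) :
    Finset (Finset A) :=
  Finset.univ.filter (fun s : Finset A =>
    s.Nonempty ∧ (∀ a ∈ s, P a) ∧ ∀ a ∈ s, ∀ b ∈ s, R a b)

/-- A complex is a cone if some vertex lies in every maximal simplex. -/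
def IsCone {A : Type u} (X : Finset (Finset A)) : Prop :=
  ∃ v : A, {v} ∈ X ∧ ∀ s, IsFacet X s → v ∈ s

/-- Simplicial isomorphism (onto): `Y` is the image of `X` under an injection of
vertices. -/
def Isom {A : Type u} {B : Type v} (X : Finset (Finset A)) (Y : Finset (Finset B)) : Prop :=
  ∃ f : A → B, Function.Injective f ∧ Y = X.image (fun s => s.image f)

/-! ### A combinatorial model of the arc complex of a crown `Δ°ₙ`
(a disk with `n` marked boundary vertices, labelled by `Fin n` in cyclic order, and one
marked interior point `0`). -/

/-- `k` lies in the closed cyclic interval from `i` to `j` (counterclockwise); by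
convention the interval is the full circle when `i = j`. -/
def btwn {n : ℕ} (i j k : Fin n) : Prop :=
  if i = j then True
  else if i.val ≤ j.val then i.val ≤ k.val ∧ k.val ≤ j.val
  else i.val ≤ k.val ∨ k.val ≤ j.val

/-- `k` lies strictly inside the cyclic interval from `i` to `j`. -/
def sbtwn {n : ℕ} (i j k : Fin n) : Prop := btwn i j k ∧ k ≠ i ∧ k ≠ j

/-- Disjointness (compatibility) of two boundary arcs, each encoded by the ordered pair
`(i, j)` of its endpoints, the polygonal side being the cyclic interval `[i..j]`
(the pair `(i, i)` encodes the maximal boundary arc `M i`, whose polygonal side is the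
whole circle).  Two such arcs are compatible iff their polygonal sides are nested
(with no endpoint of the outer one strictly inside the inner interval) or have disjoint
interiors. -/
def bbDisj {n : ℕ} (p q : Fin n × Fin n) : Prop :=
  p = q ∨
  ((∀ k, btwn p.1 p.2 k → btwn q.1 q.2 k) ∧ ¬ sbtwn p.1 p.2 q.1 ∧ ¬ sbtwn p.1 p.2 q.2) ∨
  ((∀ k, btwn q.1 q.2 k → btwn p.1 p.2 k) ∧ ¬ sbtwn q.1 q.2 p.1 ∧ ¬ sbtwn q.1 q.2 p.2) ∨
  ((∀ k, ¬ (sbtwn p.1 p.2 k ∧ btwn q.1 q.2 k)) ∧ ∀ k, ¬ (btwn p.1 p.2 k ∧ sbtwn q.1 q.2 k))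

/-- Arcs of the crown `Δ°ₙ`: `Sum.inl i` is the c-arc `c i` joining the interior marked
point `0` to the boundary vertex `i`; `Sum.inr (i, j)` is the b-arc with endpoints `i, j`
whose polygonal side is the cyclic interval `[i..j]` (`Sum.inr (i, i)` is the maximal
b-arc `M i`). -/
abbrev CrownArc (n : ℕ) := Fin n ⊕ Fin n × Fin n

/-- Disjointness (compatibility, up to homotopy) of arcs of the crown: c-arcs are
pairwise disjoint; a c-arc `c k` is disjoint from a b-arc iff `k` is not strictly
inside its polygonal side; b-arcs are compatible per `bbDisj`. -/
def crownDisj {n : ℕ} : CrownArc n → CrownArc n → Prop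
  | Sum.inl _, Sum.inl _ => True
  | Sum.inl k, Sum.inr p => ¬ sbtwn p.1 p.2 k
  | Sum.inr p, Sum.inl k => ¬ sbtwn p.1 p.2 k
  | Sum.inr p, Sum.inr q => bbDisj p q

/-- Nontriviality: the maximal b-arcs `M i = Sum.inr (i, i)` only exist when `n ≥ 2`
(for `n = 1` they would cut off a bigon and be homotopic to the boundary edge). -/
def crownValid {n : ℕ} : CrownArc n → Prop
  | Sum.inl _ => True
  | Sum.inr p => p.1 ≠ p.2 ∨ 2 ≤ n

/-- The full arc complex of the crown `Δ°ₙ`: the flag complex of pairwise disjoint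
homotopy classes of nontrivial arcs. -/
def crownComplex (n : ℕ) : Finset (Finset (CrownArc n)) :=
  cliqueComplex crownValid crownDisj

/-- The inner arc complex of the crown: the subcomplex spanned by the c-arcs. -/
def innerCrownComplex (n : ℕ) : Finset (Finset (CrownArc n)) :=
  (crownComplex n).filter (fun s => ∀ a ∈ s, a.isLeft = true)

/-! ### Auxiliary lemmas -/

section Aux

lemma mem_cliqueComplex {A : Type u} [Fintype A] {P : A → Prop} {R : A → A → Prop}
    {s : Finset A} :
    s ∈ cliqueComplex P R ↔ s.Nonempty ∧ (∀ a ∈ s, P a) ∧ ∀ a ∈ s, ∀ b ∈ s, R a b := by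
  simp [cliqueComplex]

lemma cliqueComplex_congr {A : Type u} [Fintype A] {P Q : A → Prop} (R : A → A → Prop)
    (h : ∀ a, P a ↔ Q a) : cliqueComplex P R = cliqueComplex Q R := by
  ext s; simp only [mem_cliqueComplex, h]

lemma elemSC_clique {A : Type u} [Fintype A] {P : A → Prop} {R : A → A → Prop}
    (hrefl : ∀ a, R a a) (hsymm : ∀ a b, R a b → R b a)
    {v w : A} (hPv : P v) (hPw : P w) (hwv : w ≠ v) (hRvw : R v w)
    (hdom : ∀ u, P u → R u v → R u w) :
    ElemStrongCollapse (cliqueComplex P R) (cliqueComplex (fun a => P a ∧ a ≠ v) R) := by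
  refine ⟨v, w, ?_, ⟨hwv, ?_⟩, ?_⟩
  · refine mem_cliqueComplex.2 ⟨⟨v, mem_singleton_self v⟩, ?_, ?_⟩
    · intro a ha; rw [mem_singleton.1 ha]; exact hPv
    · intro a ha b hb; rw [mem_singleton.1 ha, mem_singleton.1 hb]; exact hrefl v
  · rintro s ⟨hs, hmax⟩ hv
    obtain ⟨hne, hP, hR⟩ := mem_cliqueComplex.1 hs
    have hins : insert w s ∈ cliqueComplex P R := by
      refine mem_cliqueComplex.2 ⟨⟨w, mem_insert_self w s⟩, ?_, ?_⟩
      · intro a ha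
        rcases mem_insert.1 ha with rfl | ha
        · exact hPw
        · exact hP a ha
      · intro a ha b hb
        rcases mem_insert.1 ha with h1 | h1 <;> rcases mem_insert.1 hb with h2 | h2
        · subst h1; subst h2; exact hrefl _
        · subst h1; exact hsymm _ _ (hdom b (hP b h2) (hR b h2 v hv))
        · subst h2; exact hdom a (hP a h1) (hR a h1 v hv)
        · exact hR a h1 b h2
    have := hmax (insert w s) hins (subset_insert w s)
    rw [← this]; exact mem_insert_self w s
  · ext s
    simp only [mem_filter, mem_cliqueComplex]
    constructor
    · rintro ⟨hne, hP, hR⟩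
      exact ⟨⟨hne, fun a ha => (hP a ha).1, hR⟩, fun hv' => (hP v hv').2 rfl⟩
    · rintro ⟨⟨hne, hP, hR⟩, hv'⟩
      exact ⟨hne, fun a ha => ⟨hP a ha, fun h => hv' (h ▸ ha)⟩, hR⟩

/-- The full simplex on a finite vertex set. -/
def fullSimp {A : Type u} (T : Finset A) : Finset (Finset A) :=
  T.powerset.filter (·.Nonempty)

lemma mem_fullSimp {A : Type u} {T s : Finset A} :
    s ∈ fullSimp T ↔ s ⊆ T ∧ s.Nonempty := by
  simp [fullSimp]

lemma fullSimp_collapses {A : Type u} (T : Finset A) :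
    ∀ v, v ∈ T → StrongCollapses (fullSimp T) {{v}} := by
  induction T using Finset.strongInduction with
  | _ T ih =>
    intro v hv
    by_cases hT : T = {v}
    · subst hT
      have : fullSimp ({v} : Finset A) = {{v}} := by
        ext s
        simp only [mem_fullSimp, mem_singleton, subset_singleton_iff]
        constructor
        · rintro ⟨rfl | rfl, hne⟩
          · exact absurd rfl hne.ne_empty
          · rfl
        · rintro rfl; exact ⟨Or.inr rfl, singleton_nonempty v⟩
      rw [this]
      exact Relation.ReflTransGen.refl
    · have : ∃ u ∈ T, u ≠ v := by
        by_contra h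
        push_neg at h
        exact hT (Subset.antisymm (fun x hx => mem_singleton.2 (h x hx))
          (singleton_subset_iff.2 hv))
      obtain ⟨u, hu, huv⟩ := this
      have hstep : ElemStrongCollapse (fullSimp T) (fullSimp (T.erase u)) := by
        refine ⟨u, v, mem_fullSimp.2 ⟨singleton_subset_iff.2 hu, singleton_nonempty u⟩,
          ⟨huv.symm, ?_⟩, ?_⟩
        · rintro s ⟨hs, hmax⟩ hus
          have hTmem : T ∈ fullSimp T := mem_fullSimp.2 ⟨Subset.refl T, ⟨v, hv⟩⟩
          have := hmax T hTmem (mem_fullSimp.1 hs).1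
          rw [← this]; exact hv
        · ext s
          simp only [mem_filter, mem_fullSimp, subset_erase]
          tauto
      exact Relation.ReflTransGen.head hstep
        (ih (T.erase u) (erase_ssubset hu) v (mem_erase.2 ⟨huv.symm ∘ Eq.symm ∘ Eq.symm, hv⟩))

end Aux

/-! ### Crown-specific lemmas -/

section Crown

variable {n : ℕ}

lemma crownDisj_refl (a : CrownArc n) : crownDisj a a := by
  cases a with
  | inl k => trivial
  | inr p => exact Or.inl rfl

lemma bbDisj_symm {p q : Fin n × Fin n} (h : bbDisj p q) : bbDisj q p := by
  rcases h with h | h | h | h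
  · exact Or.inl h.symm
  · exact Or.inr (Or.inr (Or.inl h))
  · exact Or.inr (Or.inl h)
  · exact Or.inr (Or.inr (Or.inr
      ⟨fun k hk => h.2 k ⟨hk.2, hk.1⟩, fun k hk => h.1 k ⟨hk.2, hk.1⟩⟩))

lemma crownDisj_symm (a b : CrownArc n) (h : crownDisj a b) : crownDisj b a := by
  cases a with
  | inl k =>
    cases b with
    | inl l => trivial
    | inr q => exact h
  | inr p =>
    cases b with
    | inl l => exact h
    | inr q => exact bbDisj_symm h

lemma btwn_left (i j : Fin n) : btwn i j i := by
  unfold btwn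
  split_ifs <;> simp_all

/-- The number of boundary vertices strictly inside the polygonal side of a b-arc. -/
def intSize (p : Fin n × Fin n) : ℕ := (univ.filter (fun k => sbtwn p.1 p.2 k)).card

lemma key_lemma {p q : Fin n × Fin n} (hd : bbDisj q p) (hs : sbtwn q.1 q.2 p.1)
    (hle : intSize q ≤ intSize p) : False := by
  rcases hd with h | h | h | h
  · rw [h] at hs; exact hs.2.1 rfl
  · exact h.2.1 hs
  · have hsub : (univ.filter (fun k => sbtwn p.1 p.2 k)) ⊂
        (univ.filter (fun k => sbtwn q.1 q.2 k)) := by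
      constructor
      · intro k hk
        obtain ⟨-, hk⟩ := mem_filter.1 hk
        refine mem_filter.2 ⟨mem_univ k, h.1 k hk.1, ?_, ?_⟩
        · rintro rfl; exact h.2.1 hk
        · rintro rfl; exact h.2.2 hk
      · intro hcon
        have h1 : p.1 ∈ univ.filter (fun k => sbtwn q.1 q.2 k) :=
          mem_filter.2 ⟨mem_univ _, hs⟩
        have h2 := mem_filter.1 (hcon h1)
        exact h2.2.2.1 rfl
    exact absurd hle (not_le.2 (card_lt_card hsub))
  · exact h.1 p.1 ⟨hs, btwn_left p.1 p.2⟩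

/-- The intermediate complexes: only b-arcs with labels in `S` are kept. -/
def XS (n : ℕ) (S : Finset (Fin n × Fin n)) : Finset (Finset (CrownArc n)) :=
  cliqueComplex
    (fun a => crownValid a ∧ ∀ p : Fin n × Fin n, a = Sum.inr p → p ∈ S) crownDisj

lemma crown_step (S : Finset (Fin n × Fin n)) (p : Fin n × Fin n) (hp : p ∈ S)
    (hmax : ∀ q ∈ S, intSize q ≤ intSize p) :
    XS n S = XS n (S.erase p) ∨ ElemStrongCollapse (XS n S) (XS n (S.erase p)) := by
  by_cases hval : crownValid (Sum.inr p : CrownArc n)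
  · right
    have hstep := elemSC_clique (P := fun a : CrownArc n =>
        crownValid a ∧ ∀ p' : Fin n × Fin n, a = Sum.inr p' → p' ∈ S) (R := crownDisj)
      crownDisj_refl crownDisj_symm
      (v := Sum.inr p) (w := Sum.inl p.1)
      ⟨hval, fun p' h => (Sum.inr.inj h) ▸ hp⟩
      ⟨trivial, fun p' h => absurd h (by simp)⟩
      (by simp)
      (fun hsb => hsb.2.1 rfl)
      ?_
    · have hco : cliqueComplex (fun a : CrownArc n =>
          (crownValid a ∧ ∀ p' : Fin n × Fin n, a = Sum.inr p' → p' ∈ S) ∧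
            a ≠ Sum.inr p) crownDisj = XS n (S.erase p) := by
        apply cliqueComplex_congr
        intro a
        cases a with
        | inl k => simp
        | inr q =>
          simp only [Sum.inr.injEq, ne_eq, mem_erase]
          constructor
          · rintro ⟨⟨hv', hq⟩, hne⟩
            refine ⟨hv', fun p' hp' => ?_⟩
            subst hp'
            exact ⟨hne, hq _ rfl⟩
          · rintro ⟨hv', hq⟩
            refine ⟨⟨hv', fun p' hp' => ?_⟩, fun he => (hq q rfl).1 he⟩
            subst hp'
            exact (hq _ rfl).2
      rw [← hco]
      exact hstep
    · intro u hPu hRu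
      cases u with
      | inl k => trivial
      | inr q =>
        intro hsb
        exact key_lemma hRu hsb (hmax q (hPu.2 q rfl))
  · left
    apply cliqueComplex_congr
    intro a
    cases a with
    | inl k => simp
    | inr q =>
      by_cases hqp : q = p
      · subst hqp
        simp only [Sum.inr.injEq]
        constructor
        · rintro ⟨hv', -⟩; exact absurd hv' hval
        · rintro ⟨hv', -⟩; exact absurd hv' hval
      · simp only [Sum.inr.injEq, mem_erase]
        constructor
        · rintro ⟨hv', hq⟩
          refine ⟨hv', fun p' hp' => ?_⟩
          subst hp'
          exact ⟨hqp, hq _ rfl⟩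
        · rintro ⟨hv', hq⟩
          refine ⟨hv', fun p' hp' => ?_⟩
          subst hp'
          exact (hq _ rfl).2

lemma crown_collapses (S : Finset (Fin n × Fin n)) :
    StrongCollapses (XS n S) (XS n ∅) := by
  induction S using Finset.strongInduction with
  | _ S ih =>
    rcases S.eq_empty_or_nonempty with rfl | hne
    · exact Relation.ReflTransGen.refl
    · obtain ⟨p, hp, hmax⟩ := S.exists_max_image intSize hne
      have hrec := ih (S.erase p) (erase_ssubset hp)
      rcases crown_step S p hp hmax with heq | hstep
      · rw [heq]; exact hrec
      · exact Relation.ReflTransGen.head hstep hrec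

lemma XS_univ_eq : XS n Finset.univ = crownComplex n := by
  unfold XS crownComplex
  apply cliqueComplex_congr
  intro a
  simp

lemma XS_empty_eq :
    XS n ∅ = fullSimp (univ.image (Sum.inl : Fin n → CrownArc n)) := by
  ext s
  rw [mem_fullSimp]
  simp only [XS, mem_cliqueComplex]
  constructor
  · rintro ⟨hne, hP, -⟩
    refine ⟨fun a ha => ?_, hne⟩
    obtain ⟨-, h2⟩ := hP a ha
    cases a with
    | inl k => exact mem_image_of_mem _ (mem_univ k)
    | inr q => exact absurd (h2 q rfl) (notMem_empty q)
  · rintro ⟨hsub, hne⟩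
    refine ⟨hne, fun a ha => ?_, fun a ha b hb => ?_⟩
    · obtain ⟨k, -, rfl⟩ := mem_image.1 (hsub ha)
      exact ⟨trivial, fun p' h => absurd h (by simp)⟩
    · obtain ⟨k, -, rfl⟩ := mem_image.1 (hsub ha)
      obtain ⟨l, -, rfl⟩ := mem_image.1 (hsub hb)
      trivial

lemma inner_eq :
    innerCrownComplex n = fullSimp (univ.image (Sum.inl : Fin n → CrownArc n)) := by
  ext s
  rw [mem_fullSimp]
  simp only [innerCrownComplex, crownComplex, mem_filter, mem_cliqueComplex]
  constructor
  · rintro ⟨⟨hne, -, -⟩, hL⟩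
    refine ⟨fun a ha => ?_, hne⟩
    obtain ⟨k, rfl⟩ := Sum.isLeft_iff.1 (hL a ha)
    exact mem_image_of_mem _ (mem_univ k)
  · rintro ⟨hsub, hne⟩
    have hL : ∀ a ∈ s, ∃ k, a = Sum.inl k := by
      intro a ha
      obtain ⟨k, -, rfl⟩ := mem_image.1 (hsub ha)
      exact ⟨k, rfl⟩
    refine ⟨⟨hne, fun a ha => ?_, fun a ha b hb => ?_⟩, fun a ha => ?_⟩
    · obtain ⟨k, rfl⟩ := hL a ha; trivial
    · obtain ⟨k, rfl⟩ := hL a ha; obtain ⟨l, rfl⟩ := hL b hb; trivial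
    · obtain ⟨k, rfl⟩ := hL a ha; rfl

end Crown

/-- For `n ≥ 1` the full arc complex of the crown `Δ°ₙ` strongly
collapses onto its inner arc complex; the latter is an `(n-1)`-simplex (the full
complex on the `n` c-arcs), and consequently the full arc complex is strongly
collapsible. -/
theorem stmt7 (n : ℕ) (hn : 1 ≤ n) :
    StrongCollapses (crownComplex n) (innerCrownComplex n) ∧
    innerCrownComplex n =
      ((Finset.univ.image (Sum.inl : Fin n → CrownArc n)).powerset.filter
        (·.Nonempty)) ∧
    StrongCollapsible (crownComplex n) := by
  have h1 : StrongCollapses (crownComplex n) (innerCrownComplex n) := by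
    have h := crown_collapses (n := n) Finset.univ
    rwa [XS_univ_eq, XS_empty_eq, ← inner_eq] at h
  refine ⟨h1, ?_, ?_⟩
  · rw [inner_eq]; rfl
  · refine ⟨Sum.inl ⟨0, hn⟩, Relation.ReflTransGen.trans h1 ?_⟩
    rw [inner_eq]
    exact fullSimp_collapses _ _ (mem_image_of_mem _ (mem_univ _))
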